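/- (Proposition 4.) Let R : (K*, ∞) → ℝ be a differentiable function of the carrying capacity K such that for every K > K*: 0 < R(K) < Ŝ₁(K) and f(R(K), K) = 0, where Ŝ₁(K) = K(b−μ₀)/b − σ₁ and f(R, K) = ((Ŝ₁(K) − R) + (K/b)(μ₀ − μ₄'))R + (ρ₁/α₁)(Ŝ₁(K) − R). Then for every K > K*, 0 < K·R'(K) < σ₁ + R(K). -/

import Mathlib

/-- Proposition 4: If `R : (K*, ∞) → ℝ` is differentiable with
`0 < R(K) < Ŝ₁(K)` and `f(R(K), K) = 0` for all `K > K*`, where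
`Ŝ₁(K) = K(b-μ₀)/b - σ₁` and
`f(R, K) = ((Ŝ₁(K) - R) + (K/b)(μ₀ - μ₄'))R + (ρ₁/α₁)(Ŝ₁(K) - R)`,
then `0 < K·R'(K) < σ₁ + R(K)` for all `K > K*`. -/
theorem stmt_13
    (b α1 ρ1 μ0 μ1' μ4' : ℝ)
    (hb : 0 < b) (hα1 : 0 < α1) (hρ1 : 0 < ρ1)
    (hμ0 : 0 < μ0) (hμ1' : 0 < μ1') (hμ4' : 0 < μ4')
    (hbμ0 : μ0 < b) (hμ04 : μ0 < μ4') (hμ41 : μ4' < μ1')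
    (μ1 σ1 Kstar : ℝ)
    (hμ1 : μ1 = ρ1 + μ1') (hσ1 : σ1 = (μ1 - μ0) / α1)
    (hKstar : Kstar = b * σ1 / (b - μ0))
    (R R' : ℝ → ℝ)
    (hderiv : ∀ K > Kstar, HasDerivAt R (R' K) K)
    (hroot : ∀ K > Kstar,
      0 < R K ∧ R K < K * (b - μ0) / b - σ1 ∧
      ((K * (b - μ0) / b - σ1 - R K) + (K / b) * (μ0 - μ4')) * R K
        + (ρ1 / α1) * (K * (b - μ0) / b - σ1 - R K) = 0) :
    ∀ K > Kstar, 0 < K * R' K ∧ K * R' K < σ1 + R K := by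
  intro K hK
  have hbne : b ≠ 0 := ne_of_gt hb
  have hσ1pos : 0 < σ1 := by
    rw [hσ1, hμ1]; apply div_pos (by linarith) hα1
  have hq : 0 < ρ1 / α1 := div_pos hρ1 hα1
  obtain ⟨hrpos, hrS, hF⟩ := hroot K hK
  set r := R K with hr
  set r' := R' K with hr'
  -- chain rule derivative of the implicit equation
  have hR := hderiv K hK
  have hB : HasDerivAt (fun k => k * (b - μ0) / b - σ1 - R k)
      ((b - μ0) / b - R' K) K := by
    have h1 : HasDerivAt (fun k : ℝ => k * (b - μ0) / b) ((b - μ0) / b) K := by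
      simpa using ((hasDerivAt_id K).mul_const (b - μ0)).div_const b
    exact (h1.sub_const σ1).sub hR
  have hA : HasDerivAt (fun k => (k * (b - μ0) / b - σ1 - R k) + (k / b) * (μ0 - μ4'))
      (((b - μ0) / b - R' K) + (1 / b) * (μ0 - μ4')) K := by
    have h2 : HasDerivAt (fun k : ℝ => (k / b) * (μ0 - μ4')) ((1 / b) * (μ0 - μ4')) K := by
      simpa using ((hasDerivAt_id K).div_const b).mul_const (μ0 - μ4')
    exact hB.add h2
  have hg : HasDerivAt
      (fun k => ((k * (b - μ0) / b - σ1 - R k) + (k / b) * (μ0 - μ4')) * R k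
        + (ρ1 / α1) * (k * (b - μ0) / b - σ1 - R k))
      ((((b - μ0) / b - R' K) + (1 / b) * (μ0 - μ4')) * R K
        + ((K * (b - μ0) / b - σ1 - R K) + (K / b) * (μ0 - μ4')) * R' K
        + (ρ1 / α1) * ((b - μ0) / b - R' K)) K :=
    (hA.mul hR).add ((hB).const_mul (ρ1 / α1))
  have hEq : (fun k => ((k * (b - μ0) / b - σ1 - R k) + (k / b) * (μ0 - μ4')) * R k
        + (ρ1 / α1) * (k * (b - μ0) / b - σ1 - R k)) =ᶠ[nhds K] (fun _ => (0 : ℝ)) := by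
    filter_upwards [Ioi_mem_nhds hK] with k hk
    exact (hroot k hk).2.2
  have hzero : HasDerivAt
      (fun k => ((k * (b - μ0) / b - σ1 - R k) + (k / b) * (μ0 - μ4')) * R k
        + (ρ1 / α1) * (k * (b - μ0) / b - σ1 - R k)) 0 K :=
    (hasDerivAt_const K (0 : ℝ)).congr_of_eventuallyEq hEq
  have hE : (((b - μ0) / b - r') + (1 / b) * (μ0 - μ4')) * r
        + ((K * (b - μ0) / b - σ1 - r) + (K / b) * (μ0 - μ4')) * r'
        + (ρ1 / α1) * ((b - μ0) / b - r') = 0 := hg.unique hzero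
  -- positivity of r - S - cK
  have hSr : 0 < K * (b - μ0) / b - σ1 - r := sub_pos.2 hrS
  have hpos : 0 < r - (K * (b - μ0) / b - σ1) - (K / b) * (μ0 - μ4') := by
    nlinarith [mul_pos hq hSr, mul_pos hrpos hSr]
  -- key algebraic identity
  have key : K * r' * ((r + ρ1 / α1)
        + (r - (K * (b - μ0) / b - σ1) - (K / b) * (μ0 - μ4')))
      = (r + ρ1 / α1) * (σ1 + r) := by
    linear_combination (-K) * hE + hF
  have hD : 0 < (r + ρ1 / α1)
        + (r - (K * (b - μ0) / b - σ1) - (K / b) * (μ0 - μ4')) := by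
    nlinarith [hrpos, hq]
  constructor
  · nlinarith [mul_pos (add_pos hrpos hq) (add_pos hσ1pos hrpos), hD]
  · nlinarith [mul_pos (add_pos hσ1pos hrpos) hpos, hD]
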